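/- Let w be a doubling weight on the unit ball B^d and for a positive integer n define w_n(x) = w(B(x,1/n)) / |B(x,1/n)|, where |B(x,1/n)| is the Lebesgue measure of B(x,1/n). Then there exist constants C > 0 and s > 0 depending only on d and the doubling constant of w such that for every positive integer n and all x, y ∈ B^d, w_n(x) ≤ C (1 + n·d(x,y))^{s+1} w_n(y). -/

import Mathlib

open MeasureTheory MvPolynomial Real
open scoped InnerProductSpace ENNReal

noncomputable section

/-- Euclidean inner product on `Fin d → ℝ`. -/
def edot {d : ℕ} (x y : Fin d → ℝ) : ℝ := ∑ i, x i * y i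

/-- Squared Euclidean norm on `Fin d → ℝ`. -/
def enormSq {d : ℕ} (x : Fin d → ℝ) : ℝ := ∑ i, x i ^ 2

/-- The closed unit ball `B^d = {x : |x| ≤ 1}`. -/
def Ball (d : ℕ) : Set (Fin d → ℝ) := {x | enormSq x ≤ 1}

/-- The distance `d(x,y) = arccos(x·y + √(1-|x|²)√(1-|y|²))` on the ball. -/
def bdist {d : ℕ} (x y : Fin d → ℝ) : ℝ :=
  Real.arccos (edot x y + Real.sqrt (1 - enormSq x) * Real.sqrt (1 - enormSq y))

/-- The ball-cap `B(x,r) = {y ∈ B^d : d(x,y) ≤ r}`. -/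
def bcap {d : ℕ} (x : Fin d → ℝ) (r : ℝ) : Set (Fin d → ℝ) :=
  {y | y ∈ Ball d ∧ bdist x y ≤ r}

/-- `w(E) = ∫_E w(x) dx`. -/
def wInt {d : ℕ} (w : (Fin d → ℝ) → ℝ) (E : Set (Fin d → ℝ)) : ℝ := ∫ y in E, w y

/-- `w` is a doubling weight on the ball `B^d`, with doubling constant `L`. -/
structure IsDoublingWeight {d : ℕ} (w : (Fin d → ℝ) → ℝ) (L : ℝ) : Prop where
  nonneg : ∀ x ∈ Ball d, 0 ≤ w x
  integrableOn : IntegrableOn w (Ball d)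
  pos : 0 < ∫ x in Ball d, w x
  doubling : ∀ x ∈ Ball d, ∀ r > 0, wInt w (bcap x (2 * r)) ≤ L * wInt w (bcap x r)

/-- The weighted `L_p` norm `‖f‖_{p,w}` on the ball. -/
def wNorm {d : ℕ} (p : ℝ) (w f : (Fin d → ℝ) → ℝ) : ℝ :=
  (∫ x in Ball d, |f x| ^ p * w x) ^ (1 / p)

/-- The Euclidean norm of the gradient of a polynomial at a point. -/
def gradNorm {d : ℕ} (P : MvPolynomial (Fin d) ℝ) (x : Fin d → ℝ) : ℝ :=
  Real.sqrt (∑ i, (MvPolynomial.eval x (MvPolynomial.pderiv i P)) ^ 2)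


/-- The averaged weight `w_n(x) = w(B(x,1/n)) / |B(x,1/n)|`. -/
def wnFn {d : ℕ} (w : (Fin d → ℝ) → ℝ) (n : ℕ) (x : Fin d → ℝ) : ℝ :=
  wInt w (bcap x (1 / n)) / (volume (bcap x (1 / n))).toReal

/-! Section A : generic real lemmas -/

lemma enormSq_nonneg {d : ℕ} (x : Fin d → ℝ) : 0 ≤ enormSq x :=
  Finset.sum_nonneg fun i _ => sq_nonneg _

lemma le_of_sq_le_sq' {u c : ℝ} (hu : 0 ≤ u) (hc : 0 ≤ c) (h : u^2 ≤ c^2) : u ≤ c := by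
  have := Real.sqrt_le_sqrt h
  rwa [Real.sqrt_sq hu, Real.sqrt_sq hc] at this

lemma arccos_anti {x y : ℝ} (h : x ≤ y) : Real.arccos y ≤ Real.arccos x := by
  rw [Real.arccos_eq_pi_div_two_sub_arcsin, Real.arccos_eq_pi_div_two_sub_arcsin]
  have := Real.monotone_arcsin h
  linarith

lemma exists_pow_two_bounds (c : ℝ) (hc : 1 ≤ c) :
    ∃ k : ℕ, c ≤ 2^k ∧ (2:ℝ)^k ≤ 4*c := by
  classical
  have hP : ∃ k : ℕ, c < 2^k := pow_unbounded_of_one_lt c one_lt_two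
  set m := Nat.find hP with hmdef
  have h1 : c < 2^m := Nat.find_spec hP
  refine ⟨m, h1.le, ?_⟩
  rcases Nat.eq_zero_or_pos m with h0 | hpos
  · rw [h0]; norm_num; linarith
  · have h2 : ¬ c < 2^(m-1) := Nat.find_min hP (by omega)
    push_neg at h2
    have hme : m = (m-1)+1 := by omega
    rw [hme, pow_succ']
    nlinarith

/-! Section B : the lifted vectors and metric properties of bdist -/

def mB {d : ℕ} (x : Fin d → ℝ) : ℝ := Real.sqrt (1 - enormSq x)

lemma mB_nonneg {d : ℕ} (x : Fin d → ℝ) : 0 ≤ mB x := Real.sqrt_nonneg _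

lemma mem_Ball_iff {d : ℕ} {x : Fin d → ℝ} : x ∈ Ball d ↔ enormSq x ≤ 1 := Iff.rfl

lemma mB_sq {d : ℕ} {x : Fin d → ℝ} (hx : x ∈ Ball d) : mB x ^ 2 = 1 - enormSq x :=
  Real.sq_sqrt (by have : enormSq x ≤ 1 := hx; linarith)

def lift {d : ℕ} (x : Fin d → ℝ) : EuclideanSpace ℝ (Fin (d+1)) :=
  (WithLp.equiv 2 _).symm (Fin.snoc x (mB x))

lemma inner_lift {d : ℕ} (x y : Fin d → ℝ) :
    ⟪lift x, lift y⟫_ℝ = edot x y + mB x * mB y := by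
  simp only [lift, PiLp.inner_apply, RCLike.inner_apply, conj_trivial]
  rw [Fin.sum_univ_castSucc]
  simp [edot, Equiv.refl_apply, Fin.snoc_castSucc, Fin.snoc_last]
  rw [mul_comm (mB y)]; congr 1; exact Finset.sum_congr rfl fun i _ => mul_comm _ _

lemma inner_lift_self {d : ℕ} {x : Fin d → ℝ} (hx : x ∈ Ball d) :
    ⟪lift x, lift x⟫_ℝ = 1 := by
  rw [inner_lift, edot]
  have h1 : ∑ i, x i * x i = enormSq x := by
    simp [enormSq, sq]
  have h2 : mB x * mB x = 1 - enormSq x := by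
    have := mB_sq hx; nlinarith [this]
  rw [h1, h2]; ring

lemma norm_lift {d : ℕ} {x : Fin d → ℝ} (hx : x ∈ Ball d) : ‖lift x‖ = 1 := by
  have h : ‖lift x‖^2 = 1 := by rw [← real_inner_self_eq_norm_sq, inner_lift_self hx]
  rw [← Real.sqrt_sq (norm_nonneg (lift x)), h, Real.sqrt_one]

lemma bdist_eq_arccos_inner {d : ℕ} (x y : Fin d → ℝ) :
    bdist x y = Real.arccos ⟪lift x, lift y⟫_ℝ := by
  rw [inner_lift]; rfl

lemma abs_inner_lift_le_one {d : ℕ} {x y : Fin d → ℝ} (hx : x ∈ Ball d) (hy : y ∈ Ball d) :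
    |⟪lift x, lift y⟫_ℝ| ≤ 1 := by
  have := abs_real_inner_le_norm (lift x) (lift y)
  rwa [norm_lift hx, norm_lift hy, mul_one] at this

lemma cos_bdist {d : ℕ} {x y : Fin d → ℝ} (hx : x ∈ Ball d) (hy : y ∈ Ball d) :
    Real.cos (bdist x y) = edot x y + mB x * mB y := by
  rw [bdist_eq_arccos_inner]
  have h := abs_le.1 (abs_inner_lift_le_one hx hy)
  rw [Real.cos_arccos h.1 h.2, inner_lift]

lemma bdist_nonneg {d : ℕ} (x y : Fin d → ℝ) : 0 ≤ bdist x y := Real.arccos_nonneg _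

lemma bdist_le_pi {d : ℕ} (x y : Fin d → ℝ) : bdist x y ≤ π := Real.arccos_le_pi _

lemma edot_comm {d : ℕ} (x y : Fin d → ℝ) : edot x y = edot y x := by
  unfold edot; exact Finset.sum_congr rfl fun i _ => mul_comm _ _

lemma bdist_comm {d : ℕ} (x y : Fin d → ℝ) : bdist x y = bdist y x := by
  unfold bdist; rw [edot_comm, mul_comm]

/-- Spherical triangle inequality for unit vectors. -/
lemma arccos_inner_triangle {E : Type*} [NormedAddCommGroup E] [InnerProductSpace ℝ E]
    {u v w : E} (hu : ‖u‖ = 1) (hv : ‖v‖ = 1) (hw : ‖w‖ = 1) :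
    Real.arccos ⟪u, w⟫_ℝ ≤ Real.arccos ⟪u, v⟫_ℝ + Real.arccos ⟪v, w⟫_ℝ := by
  set a := ⟪u, v⟫_ℝ with hadef
  set b := ⟪v, w⟫_ℝ with hbdef
  have ha' : -1 ≤ a ∧ a ≤ 1 := abs_le.1 (by
    have := abs_real_inner_le_norm u v; rw [hu, hv, mul_one] at this; exact this)
  have hb' : -1 ≤ b ∧ b ≤ 1 := abs_le.1 (by
    have := abs_real_inner_le_norm v w; rw [hv, hw, mul_one] at this; exact this)
  have hvv : ⟪v, v⟫_ℝ = 1 := by rw [real_inner_self_eq_norm_sq, hv]; norm_num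
  have huu : ⟪u, u⟫_ℝ = 1 := by rw [real_inner_self_eq_norm_sq, hu]; norm_num
  have hww : ⟪w, w⟫_ℝ = 1 := by rw [real_inner_self_eq_norm_sq, hw]; norm_num
  have hnu : ‖u - a • v‖^2 = 1 - a^2 := by
    rw [norm_sub_sq_real, real_inner_smul_right, norm_smul, hu, hv]
    simp [abs_mul]
    nlinarith [sq_abs a]
  have h3 : ⟪w, v⟫_ℝ = b := by rw [hbdef]; exact real_inner_comm v w
  have hnw : ‖w - b • v‖^2 = 1 - b^2 := by
    rw [norm_sub_sq_real, real_inner_smul_right, norm_smul, hw, hv, h3]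
    simp [abs_mul]
    nlinarith [sq_abs b]
  have hkey : a * b - Real.sqrt (1 - a^2) * Real.sqrt (1 - b^2) ≤ ⟪u, w⟫_ℝ := by
    have hinner : ⟪u - a • v, w - b • v⟫_ℝ = ⟪u, w⟫_ℝ - a * b := by
      rw [inner_sub_left, inner_sub_right, inner_sub_right, real_inner_smul_left,
        real_inner_smul_left, real_inner_smul_right, real_inner_smul_right, hvv,
        ← hadef, ← hbdef]
      ring
    have hCS : -(‖u - a • v‖ * ‖w - b • v‖) ≤ ⟪u - a • v, w - b • v⟫_ℝ :=
      neg_le_of_abs_le (abs_real_inner_le_norm _ _)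
    have hnu' : ‖u - a • v‖ = Real.sqrt (1 - a^2) := by
      rw [← hnu, Real.sqrt_sq (norm_nonneg _)]
    have hnw' : ‖w - b • v‖ = Real.sqrt (1 - b^2) := by
      rw [← hnw, Real.sqrt_sq (norm_nonneg _)]
    rw [hnu', hnw', hinner] at hCS
    linarith
  by_cases hpi : Real.arccos a + Real.arccos b ≤ π
  · have hcos : Real.cos (Real.arccos a + Real.arccos b) ≤ ⟪u, w⟫_ℝ := by
      rw [Real.cos_add, Real.cos_arccos ha'.1 ha'.2, Real.cos_arccos hb'.1 hb'.2,
        Real.sin_arccos, Real.sin_arccos]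
      exact hkey
    calc Real.arccos ⟪u, w⟫_ℝ ≤ Real.arccos (Real.cos (Real.arccos a + Real.arccos b)) :=
          arccos_anti hcos
      _ = Real.arccos a + Real.arccos b :=
          Real.arccos_cos (add_nonneg (Real.arccos_nonneg _) (Real.arccos_nonneg _)) hpi
  · push_neg at hpi
    exact le_trans (Real.arccos_le_pi _) hpi.le

lemma bdist_triangle {d : ℕ} {x y z : Fin d → ℝ} (hx : x ∈ Ball d) (hy : y ∈ Ball d)
    (hz : z ∈ Ball d) : bdist x z ≤ bdist x y + bdist y z := by
  rw [bdist_eq_arccos_inner, bdist_eq_arccos_inner, bdist_eq_arccos_inner]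
  exact arccos_inner_triangle (norm_lift hx) (norm_lift hy) (norm_lift hz)

/-! Section C : contraction -/

def zpt {d : ℕ} (x y : Fin d → ℝ) : Fin d → ℝ := fun i => x i + (1/1024) * (y i - x i)

lemma enormSq_smul {d : ℕ} (c : ℝ) (v : Fin d → ℝ) :
    enormSq (fun i => c * v i) = c^2 * enormSq v := by
  unfold enormSq; rw [Finset.mul_sum]; exact Finset.sum_congr rfl fun i _ => by ring

lemma enormSq_zpt {d : ℕ} (x y : Fin d → ℝ) :
    enormSq (zpt x y) = (1 - 1/1024) * enormSq x + (1/1024) * enormSq y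
      - (1/1024) * (1 - 1/1024) * enormSq (fun i => y i - x i) := by
  unfold enormSq zpt
  rw [Finset.mul_sum, Finset.mul_sum, Finset.mul_sum, ← Finset.sum_add_distrib,
    ← Finset.sum_sub_distrib]
  exact Finset.sum_congr rfl fun i _ => by ring

lemma zpt_mem_Ball {d : ℕ} {x y : Fin d → ℝ} (hx : x ∈ Ball d) (hy : y ∈ Ball d) :
    zpt x y ∈ Ball d := by
  have h1 : enormSq x ≤ 1 := hx
  have h2 : enormSq y ≤ 1 := hy
  have h3 := enormSq_nonneg (fun i => y i - x i)
  have := enormSq_zpt x y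
  show enormSq (zpt x y) ≤ 1
  nlinarith

lemma chordsq {d : ℕ} {x y : Fin d → ℝ} (hx : x ∈ Ball d) (hy : y ∈ Ball d) :
    enormSq (fun i => y i - x i) + (mB x - mB y)^2
      = 2 - 2 * (edot x y + mB x * mB y) := by
  have h1 : enormSq (fun i => y i - x i) = enormSq x + enormSq y - 2 * edot x y := by
    unfold enormSq edot
    have h : ∑ i, (y i - x i)^2 = ∑ i, ((x i^2 + y i^2) - 2*(x i * y i)) :=
      Finset.sum_congr rfl fun i _ => by ring
    rw [h, Finset.sum_sub_distrib, Finset.sum_add_distrib, ← Finset.mul_sum]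
  linear_combination h1 + mB_sq hx + mB_sq hy

set_option maxHeartbeats 1600000 in
lemma key_alg {a b c E : ℝ} (ha : 0 ≤ a) (hb : 0 ≤ b) (hc : 0 ≤ c) (hE : 0 ≤ E)
    (hid : c^2 = (1 - 1/1024)*a^2 + (1/1024)*b^2 + (1/1024)*(1 - 1/1024)*E) :
    (1/1024)^2*E + (a - c)^2 ≤ (E + (a - b)^2)/4 := by
  obtain ⟨F, hF⟩ : ∃ F : ℝ, F = Real.sqrt ((1/1024)*(1 - 1/1024)*E) := ⟨_, rfl⟩
  have hF0 : 0 ≤ F := hF ▸ Real.sqrt_nonneg _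
  have hF2 : F^2 = (1/1024)*(1 - 1/1024)*E := by rw [hF]; exact Real.sq_sqrt (by nlinarith)
  rcases le_or_gt c a with hca | hca
  · have hgoal1 : (1 - 1/1024)*a + (1/1024)*b ≤ c := by
      apply le_of_sq_le_sq' (by positivity) hc
      nlinarith [sq_nonneg (a - b)]
    have h2 : a - c ≤ (1/1024)*(a - b) := by linarith
    have h3 : 0 ≤ a - c := by linarith
    have h4 : (a - c)^2 ≤ ((1/1024)*(a - b))^2 := by nlinarith
    nlinarith [sq_nonneg (a - b)]
  · rcases le_or_gt b a with hba | hba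
    · have h5 : (c - a)^2 ≤ (1/1024)*(1 - 1/1024)*E := by
        nlinarith [mul_nonneg (sub_nonneg.2 hca.le) ha, mul_self_le_mul_self hb hba]
      nlinarith [sq_nonneg (a - b)]
    · have hcb : (1/32)*b ≤ c := by
        apply le_of_sq_le_sq' (by positivity) hc
        nlinarith [sq_nonneg a]
      have hcF : F ≤ c := by
        apply le_of_sq_le_sq' hF0 hc
        nlinarith [sq_nonneg a, sq_nonneg b]
      obtain ⟨Z, hZ⟩ : ∃ Z : ℝ, Z = 2*(1/32)*(b - a) + F := ⟨_, rfl⟩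
      have hZ0 : 0 ≤ Z := by nlinarith
      have hDle : (c - a)*(c + a) ≤ Z*c := by
        have h6 : 2*(1/32)*(b - a)*((1/32)*b) ≤ 2*(1/32)*(b - a)*c := by
          apply mul_le_mul_of_nonneg_left hcb
          nlinarith
        have h7 : F*F ≤ F*c := mul_le_mul_of_nonneg_left hcF hF0
        nlinarith [sq_nonneg (b - a)]
      have hca2 : 0 < c + a := by linarith
      have hD : c - a ≤ Z := by
        nlinarith [mul_nonneg hZ0 ha]
      have hD2 : (c - a)^2 ≤ Z^2 := by nlinarith
      have hZ2 : Z^2 ≤ 8*(1/1024)*(b - a)^2 + 2*(1/1024)*E := by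
        nlinarith [sq_nonneg (2*(1/32)*(b - a) - F)]
      nlinarith [sq_nonneg (a - b)]

set_option maxHeartbeats 1600000 in
lemma bdist_zpt_le {d : ℕ} {x y : Fin d → ℝ} (hx : x ∈ Ball d) (hy : y ∈ Ball d) :
    bdist x (zpt x y) ≤ (1/2) * bdist x y := by
  have hz : zpt x y ∈ Ball d := zpt_mem_Ball hx hy
  have hθ0 : 0 ≤ bdist x y := bdist_nonneg x y
  have hθπ : bdist x y ≤ π := bdist_le_pi x y
  have hcosxy : Real.cos (bdist x y) = edot x y + mB x * mB y := cos_bdist hx hy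
  have hcosxz : Real.cos (bdist x (zpt x y)) = edot x (zpt x y) + mB x * mB (zpt x y) :=
    cos_bdist hx hz
  have hch1 : enormSq (fun i => y i - x i) + (mB x - mB y)^2
      = 2 - 2 * Real.cos (bdist x y) := by rw [hcosxy]; exact chordsq hx hy
  have hch2 : enormSq (fun i => zpt x y i - x i) + (mB x - mB (zpt x y))^2
      = 2 - 2 * Real.cos (bdist x (zpt x y)) := by rw [hcosxz]; exact chordsq hx hz
  have hsub : (fun i => zpt x y i - x i) = fun i => (1/1024) * (y i - x i) :=
    funext fun i => by unfold zpt; ring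
  have hEsc : enormSq (fun i => zpt x y i - x i)
      = (1/1024)^2 * enormSq (fun i => y i - x i) := by rw [hsub, enormSq_smul]
  have hid : (mB (zpt x y))^2 = (1 - 1/1024)*(mB x)^2 + (1/1024)*(mB y)^2
      + (1/1024)*(1 - 1/1024)*enormSq (fun i => y i - x i) := by
    rw [mB_sq hz, mB_sq hx, mB_sq hy, enormSq_zpt]; ring
  have hkey := key_alg (mB_nonneg x) (mB_nonneg (d := d) y) (mB_nonneg (zpt x y))
    (enormSq_nonneg (fun i => y i - x i)) hid
  have hc2' : 2 - 2 * Real.cos (bdist x (zpt x y)) ≤ (2 - 2 * Real.cos (bdist x y))/4 := by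
    rw [← hch1, ← hch2, hEsc]
    linarith
  -- half angle comparison : cos (θ/2) ≤ cos (bdist x z)
  have hs2 : Real.sin (bdist x y / 2) = 2 * Real.sin (bdist x y / 4) * Real.cos (bdist x y / 4) := by
    rw [← Real.sin_two_mul]; congr 1; ring
  have hc2 : Real.cos (bdist x y) = 1 - 2 * Real.sin (bdist x y / 2)^2 := by
    have h := Real.cos_two_mul (bdist x y / 2)
    have h2 := Real.sin_sq_add_cos_sq (bdist x y / 2)
    have : 2 * (bdist x y / 2) = bdist x y := by ring
    rw [this] at h
    linarith
  have hc4 : Real.cos (bdist x y / 2) = 1 - 2 * Real.sin (bdist x y / 4)^2 := by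
    have h := Real.cos_two_mul (bdist x y / 4)
    have h2 := Real.sin_sq_add_cos_sq (bdist x y / 4)
    have : 2 * (bdist x y / 4) = bdist x y / 2 := by ring
    rw [this] at h
    linarith
  have hs2sq : Real.sin (bdist x y / 2)^2
      = 4 * Real.sin (bdist x y / 4)^2 * Real.cos (bdist x y / 4)^2 := by rw [hs2]; ring
  have hprod : Real.sin (bdist x y / 4)^2 * Real.cos (bdist x y / 4)^2
      ≤ Real.sin (bdist x y / 4)^2 := by
    have hcle : Real.cos (bdist x y / 4)^2 ≤ 1 := by
      nlinarith [Real.cos_le_one (bdist x y / 4), Real.neg_one_le_cos (bdist x y / 4)]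
    nlinarith [mul_nonneg (sq_nonneg (Real.sin (bdist x y / 4))) (sub_nonneg.2 hcle)]
  have hhalf : Real.cos (bdist x y / 2) ≤ Real.cos (bdist x (zpt x y)) := by
    nlinarith
  rw [hcosxz] at hhalf
  have : bdist x (zpt x y) ≤ bdist x y / 2 := by
    calc bdist x (zpt x y)
        = Real.arccos (edot x (zpt x y) + mB x * mB (zpt x y)) := rfl
      _ ≤ Real.arccos (Real.cos (bdist x y / 2)) := arccos_anti hhalf
      _ = bdist x y / 2 := Real.arccos_cos (by linarith) (by linarith)
  linarith

/-! Section D : measure estimates -/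

lemma bcap_subset_Ball {d : ℕ} (x : Fin d → ℝ) (r : ℝ) : bcap x r ⊆ Ball d :=
  fun _ hy => hy.1

lemma continuous_enormSq {d : ℕ} : Continuous (enormSq : (Fin d → ℝ) → ℝ) := by
  unfold enormSq; exact continuous_finset_sum _ fun i _ => (continuous_apply i).pow 2

lemma continuous_bdist {d : ℕ} (x : Fin d → ℝ) : Continuous (fun y => bdist x y) := by
  unfold bdist edot
  apply Real.continuous_arccos.comp
  apply Continuous.add
  · exact continuous_finset_sum _ fun i _ => continuous_const.mul (continuous_apply i)
  · exact continuous_const.mul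
      (Real.continuous_sqrt.comp (continuous_const.sub continuous_enormSq))

lemma isClosed_Ball {d : ℕ} : IsClosed (Ball d) :=
  isClosed_le continuous_enormSq continuous_const

lemma measurableSet_Ball {d : ℕ} : MeasurableSet (Ball d) :=
  isClosed_Ball.measurableSet

lemma isClosed_bcap {d : ℕ} (x : Fin d → ℝ) (r : ℝ) : IsClosed (bcap x r) := by
  have : bcap x r = Ball d ∩ {y | bdist x y ≤ r} := rfl
  rw [this]
  exact isClosed_Ball.inter (isClosed_le (continuous_bdist x) continuous_const)

lemma measurableSet_bcap {d : ℕ} (x : Fin d → ℝ) (r : ℝ) : MeasurableSet (bcap x r) :=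
  (isClosed_bcap x r).measurableSet

lemma volume_Ball_lt_top {d : ℕ} : volume (Ball d) < ⊤ := by
  have hsub : Ball d ⊆ Set.pi Set.univ (fun _ : Fin d => Set.Icc (-1:ℝ) 1) := by
    intro y hy i _
    have h1 : y i ^ 2 ≤ enormSq y :=
      Finset.single_le_sum (f := fun j => y j ^ 2) (fun j _ => sq_nonneg _)
        (Finset.mem_univ i)
    have h2 : enormSq y ≤ 1 := hy
    constructor <;> nlinarith
  calc volume (Ball d) ≤ volume (Set.pi Set.univ (fun _ : Fin d => Set.Icc (-1:ℝ) 1)) :=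
        measure_mono hsub
    _ = ∏ _i : Fin d, volume (Set.Icc (-1:ℝ) 1) := volume_pi_pi _
    _ = (ENNReal.ofReal 2)^d := by
        simp [Real.volume_Icc]; norm_num
    _ < ⊤ := by
        exact lt_of_le_of_ne le_top (ENNReal.pow_ne_top ENNReal.ofReal_ne_top)

lemma volume_Ball_pos {d : ℕ} : 0 < volume (Ball d) := by
  have hsub : Set.pi Set.univ (fun _ : Fin d => Set.Icc (-(1/(d+1):ℝ)) (1/(d+1))) ⊆ Ball d := by
    intro y hy
    have h : ∀ i, y i ^ 2 ≤ (1/(d+1):ℝ)^2 := by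
      intro i
      have := hy i (Set.mem_univ i)
      exact sq_le_sq' this.1 this.2
    show enormSq y ≤ 1
    calc enormSq y ≤ ∑ _i : Fin d, (1/(d+1):ℝ)^2 := Finset.sum_le_sum fun i _ => h i
      _ = d * (1/(d+1):ℝ)^2 := by rw [Finset.sum_const]; simp [mul_comm]
      _ ≤ 1 := by
        have hd : (0:ℝ) < ((d:ℝ)+1)^2 := by positivity
        rw [div_pow, one_pow, mul_one_div, div_le_one hd]
        nlinarith [sq_nonneg (d:ℝ)]
  calc (0:ℝ≥0∞) < (ENNReal.ofReal (2/(d+1)))^d := by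
        apply ENNReal.pow_pos
        apply ENNReal.ofReal_pos.2
        positivity
    _ = ∏ _i : Fin d, volume (Set.Icc (-(1/(d+1):ℝ)) (1/(d+1))) := by
        simp [Real.volume_Icc]
        congr 1
        rw [← sub_neg_eq_add]
        norm_num
        ring
    _ = volume (Set.pi Set.univ (fun _ : Fin d => Set.Icc (-(1/(d+1):ℝ)) (1/(d+1)))) :=
        (volume_pi_pi _).symm
    _ ≤ volume (Ball d) := measure_mono hsub

lemma zpt_eq_homothety {d : ℕ} (x y : Fin d → ℝ) :
    zpt x y = AffineMap.homothety x ((1:ℝ)/1024) y := by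
  funext i
  simp [AffineMap.homothety_apply, zpt, Pi.add_apply, Pi.smul_apply, Pi.sub_apply,
    smul_eq_mul]
  ring

lemma volume_bcap_doubling {d : ℕ} {x : Fin d → ℝ} (hx : x ∈ Ball d) (r : ℝ) :
    volume (bcap x (2*r)) ≤ ENNReal.ofReal ((1024:ℝ)^d) * volume (bcap x r) := by
  have himg : (AffineMap.homothety x ((1:ℝ)/1024)) '' (bcap x (2*r)) ⊆ bcap x r := by
    rintro _ ⟨y, hy, rfl⟩
    rw [← zpt_eq_homothety]
    refine ⟨zpt_mem_Ball hx hy.1, ?_⟩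
    have h1 := bdist_zpt_le hx hy.1
    have h2 := hy.2
    linarith
  have hvol := MeasureTheory.Measure.addHaar_image_homothety (μ := volume) x
    ((1:ℝ)/1024) (bcap x (2*r))
  have hrank : Module.finrank ℝ (Fin d → ℝ) = d := Module.finrank_fin_fun ℝ
  rw [hrank] at hvol
  have hle : ENNReal.ofReal (|((1:ℝ)/1024)^d|) * volume (bcap x (2*r)) ≤ volume (bcap x r) := by
    rw [← hvol]; exact measure_mono himg
  have hone : ENNReal.ofReal ((1024:ℝ)^d) * ENNReal.ofReal (|((1:ℝ)/1024)^d|) = 1 := by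
    rw [← ENNReal.ofReal_mul (by positivity)]
    rw [abs_of_pos (by positivity)]
    rw [← mul_pow]
    norm_num
  calc volume (bcap x (2*r))
      = (ENNReal.ofReal ((1024:ℝ)^d) * ENNReal.ofReal (|((1:ℝ)/1024)^d|))
        * volume (bcap x (2*r)) := by rw [hone, one_mul]
    _ = ENNReal.ofReal ((1024:ℝ)^d) * (ENNReal.ofReal (|((1:ℝ)/1024)^d|)
        * volume (bcap x (2*r))) := by rw [mul_assoc]
    _ ≤ ENNReal.ofReal ((1024:ℝ)^d) * volume (bcap x r) := by
        exact mul_le_mul_right hle _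

lemma volume_bcap_iter {d : ℕ} {x : Fin d → ℝ} (hx : x ∈ Ball d) (r : ℝ) (k : ℕ) :
    volume (bcap x (2^k * r)) ≤ (ENNReal.ofReal ((1024:ℝ)^d))^k * volume (bcap x r) := by
  induction k with
  | zero => simp
  | succ k ih =>
    have h2 : (2:ℝ)^(k+1) * r = 2*((2^k) * r) := by ring
    rw [h2]
    calc volume (bcap x (2*(2^k * r)))
        ≤ ENNReal.ofReal ((1024:ℝ)^d) * volume (bcap x (2^k * r)) :=
          volume_bcap_doubling hx _
      _ ≤ ENNReal.ofReal ((1024:ℝ)^d) * ((ENNReal.ofReal ((1024:ℝ)^d))^k * volume (bcap x r)) :=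
          mul_le_mul_right ih _
      _ = (ENNReal.ofReal ((1024:ℝ)^d))^(k+1) * volume (bcap x r) := by
          rw [pow_succ]; ring

lemma bcap_eq_Ball {d : ℕ} (x : Fin d → ℝ) {R : ℝ} (hR : π ≤ R) : bcap x R = Ball d := by
  ext y
  exact ⟨fun h => h.1, fun h => ⟨h, le_trans (bdist_le_pi x y) hR⟩⟩

lemma volume_bcap_pos {d : ℕ} {x : Fin d → ℝ} (hx : x ∈ Ball d) {r : ℝ} (hr : 0 < r) :
    0 < volume (bcap x r) := by
  obtain ⟨k, hk⟩ := pow_unbounded_of_one_lt (π/r) (one_lt_two (α := ℝ))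
  have hR : π ≤ 2^k * r := by
    rw [div_lt_iff₀ hr] at hk
    linarith
  have hiter := volume_bcap_iter hx r k
  rw [bcap_eq_Ball x hR] at hiter
  rcases eq_or_ne (volume (bcap x r)) 0 with h0 | h0
  · rw [h0, mul_zero] at hiter
    exact absurd (le_antisymm hiter (zero_le)) (ne_of_gt volume_Ball_pos)
  · exact zero_lt_iff.2 h0

lemma volume_bcap_lt_top {d : ℕ} (x : Fin d → ℝ) (r : ℝ) : volume (bcap x r) < ⊤ :=
  lt_of_le_of_lt (measure_mono (bcap_subset_Ball x r)) volume_Ball_lt_top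

/-! Section E : weight integral lemmas and final assembly -/

lemma wInt_Ball_eq {d : ℕ} (w : (Fin d → ℝ) → ℝ) : wInt w (Ball d) = ∫ x in Ball d, w x := rfl

lemma wInt_nonneg {d : ℕ} {w : (Fin d → ℝ) → ℝ} {L : ℝ} (hw : IsDoublingWeight w L)
    {E : Set (Fin d → ℝ)} (hE : E ⊆ Ball d) (hEm : MeasurableSet E) : 0 ≤ wInt w E :=
  MeasureTheory.setIntegral_nonneg hEm fun y hy => hw.nonneg y (hE hy)

lemma wInt_mono {d : ℕ} {w : (Fin d → ℝ) → ℝ} {L : ℝ} (hw : IsDoublingWeight w L)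
    {A B : Set (Fin d → ℝ)} (hAB : A ⊆ B) (hB : B ⊆ Ball d) (hBm : MeasurableSet B) :
    wInt w A ≤ wInt w B := by
  apply MeasureTheory.setIntegral_mono_set (hw.integrableOn.mono_set hB)
  · exact (MeasureTheory.ae_restrict_iff' hBm).2 (Filter.Eventually.of_forall
      fun y hy => hw.nonneg y (hB hy))
  · exact HasSubset.Subset.eventuallyLE hAB

lemma one_le_L {d : ℕ} {w : (Fin d → ℝ) → ℝ} {L : ℝ} (hw : IsDoublingWeight w L) : 1 ≤ L := by
  have h0 : (0 : Fin d → ℝ) ∈ Ball d := by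
    show enormSq (0 : Fin d → ℝ) ≤ 1
    unfold enormSq
    simp
  have hd := hw.doubling 0 h0 π Real.pi_pos
  rw [bcap_eq_Ball (0 : Fin d → ℝ) (le_refl π),
    bcap_eq_Ball (0 : Fin d → ℝ) (by nlinarith [Real.pi_pos] : π ≤ 2*π)] at hd
  have hpos : 0 < wInt w (Ball d) := hw.pos
  nlinarith

lemma wInt_doubling_iter {d : ℕ} {w : (Fin d → ℝ) → ℝ} {L : ℝ} (hw : IsDoublingWeight w L)
    {y : Fin d → ℝ} (hy : y ∈ Ball d) {r : ℝ} (hr : 0 < r) (k : ℕ) :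
    wInt w (bcap y (2^k * r)) ≤ L^k * wInt w (bcap y r) := by
  have hL0 : (0:ℝ) ≤ L := le_trans zero_le_one (one_le_L hw)
  induction k with
  | zero => simp
  | succ k ih =>
    have h2 : (2:ℝ)^(k+1) * r = 2*((2^k) * r) := by ring
    rw [h2]
    calc wInt w (bcap y (2*(2^k * r)))
        ≤ L * wInt w (bcap y (2^k * r)) := hw.doubling y hy _ (by positivity)
      _ ≤ L * (L^k * wInt w (bcap y r)) := mul_le_mul_of_nonneg_left ih hL0
      _ = L^(k+1) * wInt w (bcap y r) := by rw [pow_succ]; ring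

lemma wInt_bcap_pos {d : ℕ} {w : (Fin d → ℝ) → ℝ} {L : ℝ} (hw : IsDoublingWeight w L)
    {y : Fin d → ℝ} (hy : y ∈ Ball d) {r : ℝ} (hr : 0 < r) : 0 < wInt w (bcap y r) := by
  obtain ⟨k, hk⟩ := pow_unbounded_of_one_lt (π/r) (one_lt_two (α := ℝ))
  have hR : π ≤ 2^k * r := by
    rw [div_lt_iff₀ hr] at hk
    linarith
  have hiter := wInt_doubling_iter hw hy hr k
  rw [bcap_eq_Ball y hR] at hiter
  have hpos : 0 < wInt w (Ball d) := hw.pos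
  have hL0 : (0:ℝ) < L := lt_of_lt_of_le zero_lt_one (one_le_L hw)
  nlinarith [pow_pos hL0 k, wInt_nonneg hw (bcap_subset_Ball y r) (measurableSet_bcap y r)]


/-- `w_n(x) ≤ C (1 + n d(x,y))^{s+1} w_n(y)` for all `x,y` in the ball,
with `C, s` depending only on `d` and the doubling constant of `w`. -/
theorem wn_pointwise_comparison (d : ℕ)
    (w : (Fin d → ℝ) → ℝ) (L : ℝ) (hw : IsDoublingWeight w L) :
    ∃ C > 0, ∃ s > 0, ∀ n : ℕ, 1 ≤ n → ∀ x ∈ Ball d, ∀ y ∈ Ball d,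
      wnFn w n x ≤ C * (1 + (n : ℝ) * bdist x y) ^ (s + 1) * wnFn w n y := by
  have hL1 : 1 ≤ L := one_le_L hw
  have hL0 : (0:ℝ) ≤ L := by linarith
  obtain ⟨q, hq⟩ : ∃ q : ℕ, L ≤ 2^q := by
    obtain ⟨q, hq⟩ := pow_unbounded_of_one_lt L (one_lt_two (α := ℝ))
    exact ⟨q, hq.le⟩
  refine ⟨(4:ℝ)^(10*d + q + 2), by positivity, 10*d + q + 1, by omega, ?_⟩
  intro n hn x hx y hy
  set r : ℝ := 1 / (n:ℝ) with hrdef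
  have hn0 : (0:ℝ) < n := by exact_mod_cast hn
  have hr : 0 < r := by rw [hrdef]; positivity
  have hrn : (n:ℝ) * r = 1 := by rw [hrdef]; field_simp
  set ρ := bdist x y with hρdef
  have hρ0 : 0 ≤ ρ := bdist_nonneg x y
  set c : ℝ := 1 + (n:ℝ) * ρ with hcdef
  have hc1 : 1 ≤ c := by rw [hcdef]; nlinarith
  obtain ⟨k, hk1, hk2⟩ := exists_pow_two_bounds c hc1
  have hrc : ρ + r = r * c := by
    rw [hcdef]; rw [mul_add, mul_one, ← mul_assoc, mul_comm r (n:ℝ), hrn]; ring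
  have hrck : ρ + r ≤ 2^k * r := by
    rw [hrc]
    calc r * c ≤ r * 2^k := by
          exact mul_le_mul_of_nonneg_left hk1 hr.le
      _ = 2^k * r := mul_comm _ _
  -- subset relations
  have hsub1 : bcap x r ⊆ bcap y (2^k * r) := by
    intro z hz
    refine ⟨hz.1, ?_⟩
    have ht := bdist_triangle hy hx hz.1
    have h2 := hz.2
    rw [← bdist_comm x y, ← hρdef] at ht
    linarith
  have hsub2 : bcap y r ⊆ bcap x (2^k * r) := by
    intro z hz
    refine ⟨hz.1, ?_⟩
    have ht := bdist_triangle hx hy hz.1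
    have h2 := hz.2
    rw [← hρdef] at ht
    linarith
  -- weight side
  have hW1 : wInt w (bcap x r) ≤ wInt w (bcap y (2^k * r)) :=
    wInt_mono hw hsub1 (bcap_subset_Ball _ _) (measurableSet_bcap _ _)
  have hW2 : wInt w (bcap y (2^k * r)) ≤ L^k * wInt w (bcap y r) :=
    wInt_doubling_iter hw hy hr k
  have hWy0 : 0 ≤ wInt w (bcap y r) :=
    wInt_nonneg hw (bcap_subset_Ball _ _) (measurableSet_bcap _ _)
  have hLk : L^k ≤ 4^q * c^q := by
    calc L^k ≤ ((2:ℝ)^q)^k := pow_le_pow_left₀ hL0 hq k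
      _ = ((2:ℝ)^k)^q := by rw [← pow_mul, ← pow_mul, Nat.mul_comm]
      _ ≤ (4*c)^q := pow_le_pow_left₀ (by positivity) hk2 q
      _ = 4^q * c^q := mul_pow _ _ _
  have hWx : wInt w (bcap x r) ≤ (4^q * c^q) * wInt w (bcap y r) := by
    calc wInt w (bcap x r) ≤ L^k * wInt w (bcap y r) := le_trans hW1 hW2
      _ ≤ (4^q * c^q) * wInt w (bcap y r) := mul_le_mul_of_nonneg_right hLk hWy0
  -- volume side
  have hV1 : volume (bcap y r) ≤ (ENNReal.ofReal ((1024:ℝ)^d))^k * volume (bcap x r) :=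
    le_trans (measure_mono hsub2) (volume_bcap_iter hx r k)
  have hVx0 : 0 < (volume (bcap x r)).toReal :=
    ENNReal.toReal_pos (ne_of_gt (volume_bcap_pos hx hr)) (ne_of_lt (volume_bcap_lt_top x r))
  have hVy0 : 0 < (volume (bcap y r)).toReal :=
    ENNReal.toReal_pos (ne_of_gt (volume_bcap_pos hy hr)) (ne_of_lt (volume_bcap_lt_top y r))
  have hVreal : (volume (bcap y r)).toReal ≤ ((1024:ℝ)^d)^k * (volume (bcap x r)).toReal := by
    have hfin : (ENNReal.ofReal ((1024:ℝ)^d))^k * volume (bcap x r) ≠ ⊤ :=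
      ENNReal.mul_ne_top (ENNReal.pow_ne_top ENNReal.ofReal_ne_top)
        (ne_of_lt (volume_bcap_lt_top x r))
    have := ENNReal.toReal_mono hfin hV1
    rwa [ENNReal.toReal_mul, ENNReal.toReal_pow, ENNReal.toReal_ofReal (by positivity)] at this
  have hVk : ((1024:ℝ)^d)^k ≤ 4^(10*d) * c^(10*d) := by
    have h1024 : (1024:ℝ)^d = 2^(10*d) := by
      rw [pow_mul]; norm_num
    calc ((1024:ℝ)^d)^k = ((2:ℝ)^k)^(10*d) := by
          rw [h1024, ← pow_mul, ← pow_mul, Nat.mul_comm]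
      _ ≤ (4*c)^(10*d) := pow_le_pow_left₀ (by positivity) hk2 _
      _ = 4^(10*d) * c^(10*d) := mul_pow _ _ _
  have hVy : (volume (bcap y r)).toReal ≤ (4^(10*d) * c^(10*d)) * (volume (bcap x r)).toReal :=
    le_trans hVreal (mul_le_mul_of_nonneg_right hVk hVx0.le)
  -- combine
  have hkey : wInt w (bcap x r) * (volume (bcap y r)).toReal
      ≤ ((4:ℝ)^(10*d + q + 2) * c^(10*d + q + 1 + 1)) * (wInt w (bcap y r) * (volume (bcap x r)).toReal) := by
    have hWx0 : 0 ≤ wInt w (bcap x r) :=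
      wInt_nonneg hw (bcap_subset_Ball _ _) (measurableSet_bcap _ _)
    calc wInt w (bcap x r) * (volume (bcap y r)).toReal
        ≤ ((4^q * c^q) * wInt w (bcap y r)) * ((4^(10*d) * c^(10*d)) * (volume (bcap x r)).toReal) := by
          apply mul_le_mul hWx hVy (ENNReal.toReal_nonneg) (by positivity)
      _ = (4^(q + 10*d) * c^(q + 10*d)) * (wInt w (bcap y r) * (volume (bcap x r)).toReal) := by
          rw [pow_add, pow_add]; ring
      _ ≤ ((4:ℝ)^(10*d + q + 2) * c^(10*d + q + 1 + 1)) * (wInt w (bcap y r) * (volume (bcap x r)).toReal) := by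
          apply mul_le_mul_of_nonneg_right _ (mul_nonneg hWy0 ENNReal.toReal_nonneg)
          apply mul_le_mul
          · exact pow_le_pow_right₀ (by norm_num) (by omega)
          · exact pow_le_pow_right₀ hc1 (by omega)
          · positivity
          · positivity
  -- conclude
  simp only [wnFn]
  rw [← hrdef, ← mul_div_assoc, div_le_div_iff₀ hVx0 hVy0]
  exact hkey.trans_eq (by ring)

end
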